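/- Let ε := sup_{0<z≤x} |g(z) − bz| and suppose x ∈ (0,1) is small enough that 2ε < γ². Then the double integral Σ(0,x) := ∫_0^x ( ∫_u^x (1/d(η)) exp{ ∫_η^1 (g(z) − bz)/d(z) dz } dη ) · exp{ −∫_u^1 (g(z) − bz)/d(z) dz } du is finite, where d(z) := γ²z + σ²z²/2. -/

import Mathlib

open MeasureTheory Set

/-- Let ε := sup_{0<z≤x} |g(z) − bz| and suppose x ∈ (0,1) is small enough that 2ε < γ².
Then Σ(0,x) = ∫_0^x (∫_u^x (1/d(η)) exp{∫_η^1 (g−bz)/d} dη) exp{−∫_u^1 (g−bz)/d} du is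
finite, where d(z) = γ²z + σ²z²/2. -/
theorem stmt_16 (g : ℝ → ℝ) (b γ σ x ε : ℝ)
    (hg_cont : ContinuousOn g (Ici 0)) (hg0 : g 0 = 0)
    (hγ : 0 < γ) (hσ : 0 ≤ σ)
    (d : ℝ → ℝ) (hd : ∀ z, d z = γ ^ 2 * z + σ ^ 2 * z ^ 2 / 2)
    (hx : x ∈ Ioo (0:ℝ) 1)
    (hε : ε = sSup ((fun z => |g z - b * z|) '' Ioc 0 x))
    (h2ε : 2 * ε < γ ^ 2) :
    IntegrableOn
      (fun u =>
        (∫ η in u..x, (1 / d η) * Real.exp (∫ z in η..(1:ℝ), (g z - b * z) / d z)) *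
          Real.exp (-(∫ z in u..(1:ℝ), (g z - b * z) / d z)))
      (Ioc 0 x) volume := by
  obtain ⟨hx0, hx1⟩ := hx
  set h : ℝ → ℝ := fun z => (g z - b * z) / d z with hh
  have hγ2 : (0:ℝ) < γ ^ 2 := by positivity
  have hdpos : ∀ z : ℝ, 0 < z → 0 < d z := by
    intro z hz; rw [hd]; positivity
  have hdup : ∀ z : ℝ, 0 < z → γ ^ 2 * z ≤ d z := by
    intro z hz; rw [hd]; nlinarith [sq_nonneg σ, sq_nonneg z]
  have hdcont : Continuous d := by
    have : d = fun z => γ ^ 2 * z + σ ^ 2 * z ^ 2 / 2 := funext hd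
    rw [this]; continuity
  have hhcont : ContinuousOn h (Ioi 0) := by
    apply ContinuousOn.div
    · exact (hg_cont.mono (Ioi_subset_Ici le_rfl)).sub
        (continuous_const.mul continuous_id).continuousOn
    · exact hdcont.continuousOn
    · intro z hz; exact (hdpos z hz).ne'
  have hhint : ∀ a c : ℝ, 0 < a → 0 < c → IntervalIntegrable h volume a c := by
    intro a c ha hc
    apply (hhcont.mono ?_).intervalIntegrable
    intro z hz
    exact lt_of_lt_of_le (lt_min ha hc) hz.1
  -- ε bounds
  have hbdd : BddAbove ((fun z => |g z - b * z|) '' Ioc 0 x) := by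
    have hc : ContinuousOn (fun z => |g z - b * z|) (Icc 0 x) :=
      ((hg_cont.mono (Icc_subset_Ici_self)).sub
        (continuous_const.mul continuous_id).continuousOn).abs
    exact (isCompact_Icc.image_of_continuousOn hc).bddAbove.mono
      (image_mono Ioc_subset_Icc_self)
  have hεle : ∀ z ∈ Ioc 0 x, |g z - b * z| ≤ ε := fun z hz =>
    hε ▸ le_csSup hbdd (mem_image_of_mem _ hz)
  have hε0 : 0 ≤ ε := le_trans (abs_nonneg _) (hεle x (right_mem_Ioc.2 hx0))
  set α : ℝ := ε / γ ^ 2 with hα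
  have hα0 : 0 ≤ α := div_nonneg hε0 hγ2.le
  have hα2 : α < 1 / 2 := by
    rw [hα, div_lt_iff₀ hγ2]; linarith
  -- pointwise bound on h
  have hhb : ∀ z ∈ Ioc 0 x, |h z| ≤ α * z⁻¹ := by
    intro z hz
    have hdz := hdpos z hz.1
    have hz0 : (0:ℝ) < z := hz.1
    rw [hh]
    simp only
    rw [abs_div, abs_of_pos hdz, div_le_iff₀ hdz]
    calc |g z - b * z| ≤ ε := hεle z hz
      _ = ε / γ ^ 2 * (z⁻¹ * (γ ^ 2 * z)) := by field_simp
      _ ≤ ε / γ ^ 2 * (z⁻¹ * d z) := by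
          gcongr
          exact hdup z hz0
      _ = α * z⁻¹ * d z := by rw [hα]; ring
  -- log bound on integrals of h
  have hlog : ∀ u ∈ Ioc 0 x, |∫ z in u..x, h z| ≤ α * (Real.log x - Real.log u) := by
    intro u hu
    have hu0 : (0:ℝ) < u := hu.1
    have hux : u ≤ x := hu.2
    have hbint : IntervalIntegrable (fun z => α * z⁻¹) volume u x := by
      apply ContinuousOn.intervalIntegrable
      apply continuousOn_const.mul
      apply continuousOn_inv₀.mono
      intro z hz
      exact (lt_of_lt_of_le (lt_min hu0 hx0) hz.1).ne'
    calc |∫ z in u..x, h z| ≤ ∫ z in u..x, |h z| := by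
          simpa [Real.norm_eq_abs] using
            intervalIntegral.norm_integral_le_integral_norm (f := h) (μ := volume) hux
      _ ≤ ∫ z in u..x, α * z⁻¹ := by
          apply intervalIntegral.integral_mono_on hux ((hhint u x hu0 hx0).abs) hbint
          intro z hz
          exact hhb z ⟨lt_of_lt_of_le hu0 hz.1, hz.2⟩
      _ = α * (Real.log x - Real.log u) := by
          rw [intervalIntegral.integral_const_mul, integral_inv_of_pos hu0 hx0,
            Real.log_div (ne_of_gt hx0) (ne_of_gt hu0)]
    -- split integrals at x
  set I : ℝ := ∫ z in x..(1:ℝ), h z with hI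
  have hsplit : ∀ u ∈ Ioc 0 x, (∫ z in u..(1:ℝ), h z) = (∫ z in u..x, h z) + I := by
    intro u hu
    rw [hI]
    exact (intervalIntegral.integral_add_adjacent_intervals (hhint u x hu.1 hx0)
      (hhint x 1 hx0 one_pos)).symm
  have habs : ∀ u ∈ Ioc 0 x, |∫ z in u..(1:ℝ), h z| ≤ α * (Real.log x - Real.log u) + |I| := by
    intro u hu
    rw [hsplit u hu]
    exact (abs_add_le _ _).trans (add_le_add_left (hlog u hu) _)
  set C : ℝ := Real.exp |I| * x ^ α with hC
  have hC0 : 0 < C := by rw [hC]; positivity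
  have hrpow : ∀ u ∈ Ioc 0 x, Real.exp (α * (Real.log x - Real.log u) + |I|)
      = C * u ^ (-α) := by
    intro u hu
    rw [hC, Real.rpow_def_of_pos hx0, Real.rpow_def_of_pos hu.1, ← Real.exp_add, ← Real.exp_add]
    ring_nf
  have hexpP : ∀ u ∈ Ioc 0 x, Real.exp (∫ z in u..(1:ℝ), h z) ≤ C * u ^ (-α) := by
    intro u hu
    rw [← hrpow u hu]
    exact Real.exp_le_exp.2 ((le_abs_self _).trans (habs u hu))
  have hexpN : ∀ u ∈ Ioc 0 x, Real.exp (-(∫ z in u..(1:ℝ), h z)) ≤ C * u ^ (-α) := by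
    intro u hu
    rw [← hrpow u hu]
    exact Real.exp_le_exp.2 ((neg_le_abs _).trans (habs u hu))
  -- bound on the inner integrand
  have hGb : ∀ η ∈ Ioc 0 x, (1 / d η) * Real.exp (∫ z in η..(1:ℝ), h z)
      ≤ C / γ ^ 2 * η ^ (-(3/2) : ℝ) := by
    intro η hη
    have hη0 : (0:ℝ) < η := hη.1
    have hη1 : η ≤ 1 := le_trans hη.2 hx1.le
    have hd0 := hdpos η hη0
    have h1 : 1 / d η ≤ 1 / (γ ^ 2 * η) :=
      one_div_le_one_div_of_le (by positivity) (hdup η hη0)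
    calc (1 / d η) * Real.exp (∫ z in η..(1:ℝ), h z)
        ≤ (1 / (γ ^ 2 * η)) * (C * η ^ (-α)) := by
          apply mul_le_mul h1 (hexpP η hη) (Real.exp_pos _).le (by positivity)
      _ = C / γ ^ 2 * (η⁻¹ * η ^ (-α)) := by field_simp
      _ ≤ C / γ ^ 2 * η ^ (-(3/2) : ℝ) := by
          apply mul_le_mul_of_nonneg_left _ (by positivity)
          rw [← Real.rpow_neg_one η, ← Real.rpow_add hη0]
          exact Real.rpow_le_rpow_of_exponent_ge hη0 hη1 (by linarith)
  -- continuity of the primitive of h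
  have hHcont : ∀ t : ℝ, 0 < t → t ≤ 1 →
      ContinuousOn (fun η => ∫ z in η..(1:ℝ), h z) (Icc t 1) := by
    intro t ht ht1
    have hint : IntegrableOn h (uIcc t 1) := by
      rw [uIcc_of_le ht1]
      exact (hhcont.mono (fun z hz => lt_of_lt_of_le ht hz.1)).integrableOn_Icc
    have := intervalIntegral.continuousOn_primitive_interval_left hint
    rwa [uIcc_of_le ht1] at this
  -- continuity of the inner integrand
  have hGcont : ∀ t : ℝ, 0 < t → t ≤ 1 →
      ContinuousOn (fun η => (1 / d η) * Real.exp (∫ z in η..(1:ℝ), h z)) (Icc t 1) := by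
    intro t ht ht1
    apply ContinuousOn.mul
    · apply ContinuousOn.div continuousOn_const hdcont.continuousOn
      intro z hz
      exact (hdpos z (lt_of_lt_of_le ht hz.1)).ne'
    · exact Real.continuous_exp.comp_continuousOn (hHcont t ht ht1)
  have hGint : ∀ u ∈ Ioc 0 x, IntervalIntegrable
      (fun η => (1 / d η) * Real.exp (∫ z in η..(1:ℝ), h z)) volume u x := by
    intro u hu
    exact (((hGcont u hu.1 (le_trans hu.2 hx1.le)).mono
      (Icc_subset_Icc le_rfl hx1.le)).intervalIntegrable_of_Icc hu.2)
  -- bound on the inner integral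
  have hInner : ∀ u ∈ Ioc 0 x, (∫ η in u..x, (1 / d η) * Real.exp (∫ z in η..(1:ℝ), h z))
      ≤ C / γ ^ 2 * 2 * u ^ (-(1/2) : ℝ) := by
    intro u hu
    have hu0 : (0:ℝ) < u := hu.1
    have h0notin : (0:ℝ) ∉ uIcc u x := by
      rw [uIcc_of_le hu.2]
      intro h0
      exact absurd h0.1 (not_le.2 hu0)
    have hb2 : IntervalIntegrable (fun η : ℝ => C / γ ^ 2 * η ^ (-(3/2) : ℝ)) volume u x :=
      (intervalIntegral.intervalIntegrable_rpow (Or.inr h0notin)).const_mul _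
    calc (∫ η in u..x, (1 / d η) * Real.exp (∫ z in η..(1:ℝ), h z))
        ≤ ∫ η in u..x, C / γ ^ 2 * η ^ (-(3/2) : ℝ) := by
          apply intervalIntegral.integral_mono_on hu.2 (hGint u hu) hb2
          intro η hη
          exact hGb η ⟨lt_of_lt_of_le hu0 hη.1, hη.2⟩
      _ = C / γ ^ 2 * ((x ^ (-(3/2) + 1 : ℝ) - u ^ (-(3/2) + 1 : ℝ)) / (-(3/2) + 1)) := by
          rw [intervalIntegral.integral_const_mul, integral_rpow (Or.inr ⟨by norm_num, h0notin⟩)]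
      _ = C / γ ^ 2 * (2 * (u ^ (-(1/2) : ℝ) - x ^ (-(1/2) : ℝ))) := by
          rw [show (-(3/2) + 1 : ℝ) = -(1/2) by norm_num]
          ring
      _ ≤ C / γ ^ 2 * 2 * u ^ (-(1/2) : ℝ) := by
          have : (0:ℝ) ≤ x ^ (-(1/2) : ℝ) := Real.rpow_nonneg hx0.le _
          have hCg : (0:ℝ) ≤ C / γ ^ 2 := by positivity
          nlinarith [Real.rpow_nonneg hu0.le (-(1/2) : ℝ)]
  -- integrable bound
  have hBint : IntegrableOn (fun u : ℝ => C / γ ^ 2 * 2 * C * u ^ (-(1/2) - α : ℝ))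
      (Ioc 0 x) volume := by
    have hri : IntervalIntegrable (fun u : ℝ => u ^ (-(1/2) - α : ℝ)) volume 0 x :=
      intervalIntegral.intervalIntegrable_rpow' (by linarith)
    rw [intervalIntegrable_iff_integrableOn_Ioc_of_le hx0.le] at hri
    exact hri.const_mul _
  -- conclude
  apply MeasureTheory.Integrable.mono' hBint
  · -- measurability via continuity
    apply ContinuousOn.aestronglyMeasurable ?_ measurableSet_Ioc
    intro u0 hu0
    have h20 : (0:ℝ) < u0 / 2 := by linarith [hu0.1]
    have h2x : u0 / 2 ≤ x := by linarith [hu0.2, hu0.1]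
    have h21 : u0 / 2 ≤ 1 := le_trans h2x hx1.le
    have hc1 : ContinuousOn (fun u => ∫ η in u..x, (1 / d η) *
        Real.exp (∫ z in η..(1:ℝ), h z)) (Icc (u0/2) x) := by
      have hint : IntegrableOn (fun η => (1 / d η) * Real.exp (∫ z in η..(1:ℝ), h z))
          (uIcc (u0/2) x) := by
        rw [uIcc_of_le h2x]
        exact ((hGcont (u0/2) h20 h21).mono (Icc_subset_Icc le_rfl hx1.le)).integrableOn_Icc
      have := intervalIntegral.continuousOn_primitive_interval_left hint
      rwa [uIcc_of_le h2x] at this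
    have hc2 : ContinuousOn (fun u => Real.exp (-(∫ z in u..(1:ℝ), h z))) (Icc (u0/2) 1) :=
      Real.continuous_exp.comp_continuousOn (hHcont (u0/2) h20 h21).neg
    have hc := hc1.mul (hc2.mono (Icc_subset_Icc le_rfl hx1.le))
    have hmem : Icc (u0/2) x ∈ nhdsWithin u0 (Ioc 0 x) := by
      apply Filter.mem_of_superset (inter_mem_nhdsWithin (Ioc 0 x)
        (Ioi_mem_nhds (by linarith [hu0.1] : u0/2 < u0)))
      rintro z ⟨hz1, hz2⟩
      exact ⟨le_of_lt hz2, hz1.2⟩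
    exact (hc.continuousWithinAt ⟨by linarith [hu0.1], hu0.2⟩).mono_of_mem_nhdsWithin hmem
  · rw [ae_restrict_iff' measurableSet_Ioc]
    filter_upwards with u hu
    have hu0 : (0:ℝ) < u := hu.1
    have hinn : (0:ℝ) ≤ ∫ η in u..x, (1 / d η) * Real.exp (∫ z in η..(1:ℝ), h z) := by
      apply intervalIntegral.integral_nonneg hu.2
      intro η hη
      have : (0:ℝ) < d η := hdpos η (lt_of_lt_of_le hu0 hη.1)
      positivity
    rw [Real.norm_eq_abs, abs_of_nonneg (mul_nonneg hinn (Real.exp_pos _).le)]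
    calc (∫ η in u..x, (1 / d η) * Real.exp (∫ z in η..(1:ℝ), h z)) *
          Real.exp (-(∫ z in u..(1:ℝ), h z))
        ≤ (C / γ ^ 2 * 2 * u ^ (-(1/2) : ℝ)) * (C * u ^ (-α)) := by
          apply mul_le_mul (hInner u hu) (hexpN u hu) (Real.exp_pos _).le (by positivity)
      _ = C / γ ^ 2 * 2 * C * u ^ (-(1/2) - α : ℝ) := by
          rw [show (-(1/2) - α : ℝ) = (-(1/2)) + (-α) by ring, Real.rpow_add hu0]
          ring
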